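/- arXiv:math/0003219 — 2 statements merged into one kernel-verified Lean document; each statement's English description precedes it below -/
import Mathlib

section
/- The bottom row map 𝔟 : SL_n(ℤ) → ℙ^{n-1}(ℤ/Nℤ) induces a bijection from the set of right cosets Γ₀(N)\SL_n(ℤ) onto ℙ^{n-1}(ℤ/Nℤ), given by Γ₀(N)γ ↦ 𝔟(γ); that is, 𝔟 is surjective, and 𝔟(γ) = 𝔟(γ′) if and only if γ′γ⁻¹ ∈ Γ₀(N). Moreover this bijection is equivariant for the right action of SL_n(ℤ): 𝔟(γδ) = 𝔟(γ)·δ for all γ, δ ∈ SL_n(ℤ). -/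
open Matrix

/-- `SL_n(ℤ)`, the special linear group of `n × n` integer matrices of determinant 1. -/
abbrev SL (n : ℕ) := Matrix.SpecialLinearGroup (Fin n) ℤ

/-- `Γ₀(N)`: the matrices in `SL_{n+1}(ℤ)` whose bottom row is congruent to
`(0, …, 0, *)` mod `N`, i.e. all bottom-row entries except the last are divisible by `N`. -/
def Gamma0 (N : ℕ) {n : ℕ} (γ : SL (n + 1)) : Prop :=
  ∀ j : Fin (n + 1), j ≠ Fin.last n → (N : ℤ) ∣ γ.1 (Fin.last n) j

/-- A row vector over `ℤ/Nℤ` is primitive if its coordinates generate the unit ideal. -/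
def IsPrimitive {m N : ℕ} (v : Fin m → ZMod N) : Prop :=
  Ideal.span (Set.range v) = ⊤

/-- Primitive row vectors over `ℤ/Nℤ`. -/
def PrimVec (m N : ℕ) := {v : Fin m → ZMod N // IsPrimitive v}

/-- Projective equivalence: two primitive vectors are equivalent iff they differ by
multiplication by a unit of `ℤ/Nℤ`. -/
instance projSetoid (m N : ℕ) : Setoid (PrimVec m N) where
  r v w := ∃ u : (ZMod N)ˣ, w.1 = fun i => (u : ZMod N) * v.1 i
  iseqv := by
    refine ⟨fun v => ⟨1, by funext i; simp⟩, ?_, ?_⟩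
    · rintro ⟨v, hv⟩ ⟨w, hw⟩ ⟨u, h⟩
      replace h : w = fun i => (u : ZMod N) * v i := h
      refine ⟨u⁻¹, ?_⟩
      funext i
      simp [h]
    · rintro ⟨v, hv⟩ ⟨w, hw⟩ ⟨x, hx⟩ ⟨u, h⟩ ⟨u', h'⟩
      replace h : w = fun i => (u : ZMod N) * v i := h
      replace h' : x = fun i => (u' : ZMod N) * w i := h'
      refine ⟨u' * u, ?_⟩
      funext i
      simp [h', h, mul_assoc]

/-- `ℙ^{m-1}(ℤ/Nℤ)`: primitive row vectors modulo multiplication by units of `ℤ/Nℤ`. -/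
def Proj (m N : ℕ) := Quotient (projSetoid m N)

/-- Reduction of an integral matrix mod `N`. -/
def modN {n N : ℕ} (γ : SL n) : Matrix (Fin n) (Fin n) (ZMod N) :=
  γ.1.map (Int.cast : ℤ → ZMod N)

lemma modN_det {n N : ℕ} (γ : SL n) : (modN (N := N) γ).det = 1 := by
  have := (Int.castRingHom (ZMod N)).map_det γ.1
  simpa [modN, γ.2] using this.symm

lemma primitive_vecMul {m N : ℕ} (v : Fin m → ZMod N) (hv : IsPrimitive v) (γ : SL m) :
    IsPrimitive (Matrix.vecMul v (modN γ)) := by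
  set A := modN (N := N) γ with hAdef
  have : Invertible A := Matrix.invertibleOfIsUnitDet A (by rw [modN_det]; exact isUnit_one)
  have hvw : v = Matrix.vecMul (Matrix.vecMul v A) (⅟A) := by
    rw [Matrix.vecMul_vecMul, mul_invOf_self, Matrix.vecMul_one]
  refine eq_top_iff.mpr ?_
  rw [_root_.IsPrimitive] at hv
  rw [← hv]
  refine Ideal.span_le.mpr ?_
  rintro x ⟨j, rfl⟩
  have hj : v j = ∑ i, Matrix.vecMul v A i * (⅟A) i j := congrFun hvw j
  rw [hj]
  exact Ideal.sum_mem _ fun i _ =>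
    Ideal.mul_mem_right _ _ (Ideal.subset_span ⟨i, rfl⟩)

lemma vecMul_const_mul {m : ℕ} {R : Type*} [CommRing R] (c : R) (v : Fin m → R)
    (A : Matrix (Fin m) (Fin m) R) :
    Matrix.vecMul (fun i => c * v i) A = fun j => c * Matrix.vecMul v A j := by
  funext j
  simp [Matrix.vecMul, dotProduct, Finset.mul_sum, mul_assoc]

/-- The map on primitive vectors underlying the right action of `SL_m(ℤ)`. -/
def ractFun {m N : ℕ} (γ : SL m) (v : PrimVec m N) : PrimVec m N :=
  ⟨Matrix.vecMul v.1 (modN γ), primitive_vecMul v.1 v.2 γ⟩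

lemma ractFun_compat {m N : ℕ} (γ : SL m) :
    ∀ v w : PrimVec m N, v ≈ w → ractFun γ v ≈ ractFun γ w := by
  rintro ⟨v, hv⟩ ⟨w, hw⟩ ⟨u, h⟩
  replace h : w = fun i => (u : ZMod N) * v i := h
  refine ⟨u, ?_⟩
  show Matrix.vecMul w (modN γ) = _
  rw [h, vecMul_const_mul]
  rfl

/-- The right action of `SL_m(ℤ)` on `ℙ^{m-1}(ℤ/Nℤ)`: reduce the matrix mod `N` and
multiply the row vector on the right. -/
def ract {m N : ℕ} (x : Proj m N) (γ : SL m) : Proj m N :=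
  Quotient.map (ractFun γ) (ractFun_compat γ) x

lemma brow_primitive {n N : ℕ} (γ : SL (n + 1)) :
    IsPrimitive (fun j => ((γ.1 (Fin.last n) j : ℤ) : ZMod N)) := by
  rw [_root_.IsPrimitive, Ideal.eq_top_iff_one]
  have hdet : γ.1.det = 1 := γ.2
  have hexp := Matrix.det_succ_row γ.1 (Fin.last n)
  have key : ((γ.1.det : ℤ) : ZMod N) ∈
      Ideal.span (Set.range fun j => ((γ.1 (Fin.last n) j : ℤ) : ZMod N)) := by
    rw [hexp]
    push_cast
    refine Ideal.sum_mem _ fun j _ => ?_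
    exact Ideal.mul_mem_right _ _ (Ideal.mul_mem_left _ _ (Ideal.subset_span ⟨j, rfl⟩))
  rw [hdet] at key
  simpa using key

/-- The bottom row map `𝔟 : SL_{n+1}(ℤ) → ℙ^n(ℤ/Nℤ)`: the class of the bottom row
of the matrix, reduced mod `N`. -/
def brow {n : ℕ} (N : ℕ) (γ : SL (n + 1)) : Proj (n + 1) N :=
  ⟦⟨fun j => ((γ.1 (Fin.last n) j : ℤ) : ZMod N), brow_primitive γ⟩⟧

-- auxiliary lemmas to be appended after pre.lean
section Aux

open Matrix

/-- bottom row mod N -/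
def rowv {n N : ℕ} (γ : SL (n + 1)) : Fin (n + 1) → ZMod N :=
  fun j => ((γ.1 (Fin.last n) j : ℤ) : ZMod N)

lemma modN_mul {n N : ℕ} (γ δ : SL n) : modN (N := N) (γ * δ) = modN γ * modN δ := by
  have := Matrix.map_mul (L := γ.1) (M := δ.1) (f := Int.castRingHom (ZMod N))
  simpa [modN] using this

lemma rowv_mul {n N : ℕ} (γ δ : SL (n + 1)) :
    rowv (N := N) (γ * δ) = Matrix.vecMul (rowv γ) (modN δ) := by
  funext j
  show (((γ * δ).1 (Fin.last n) j : ℤ) : ZMod N) = _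
  rw [Matrix.SpecialLinearGroup.coe_mul, Matrix.mul_apply]
  push_cast
  simp [rowv, Matrix.vecMul, dotProduct, modN]

lemma brow_eq_mk {n N : ℕ} (γ : SL (n + 1)) :
    brow N γ = ⟦⟨rowv γ, brow_primitive γ⟩⟧ := rfl

lemma brow_mul {n N : ℕ} (γ δ : SL (n + 1)) :
    brow N (γ * δ) = ract (brow N γ) δ := by
  rw [brow_eq_mk, brow_eq_mk]
  show _ = Quotient.map (ractFun δ) (ractFun_compat δ) ⟦⟨rowv γ, _⟩⟧
  show _ = ⟦ractFun δ ⟨rowv γ, _⟩⟧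
  exact congrArg (Quotient.mk _) (Subtype.ext (rowv_mul γ δ))

lemma rowv_one {n N : ℕ} (j : Fin (n + 1)) (hj : j ≠ Fin.last n) :
    rowv (N := N) (1 : SL (n + 1)) j = 0 := by
  simp [rowv, Matrix.one_apply_ne' hj]

lemma brow_iff {n N : ℕ} (γ γ' : SL (n + 1)) :
    brow N γ = brow N γ' ↔ Gamma0 N (γ' * γ⁻¹) := by
  constructor
  · intro h
    obtain ⟨u, hu⟩ := Quotient.exact h
    replace hu : rowv (N := N) γ' = fun i => (u : ZMod N) * rowv γ i := hu
    intro j hj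
    rw [← ZMod.intCast_zmod_eq_zero_iff_dvd]
    have : rowv (N := N) (γ' * γ⁻¹) j = 0 := by
      rw [rowv_mul, hu, vecMul_const_mul]
      have h2 : Matrix.vecMul (rowv (N := N) γ) (modN γ⁻¹) = rowv (γ * γ⁻¹) := (rowv_mul γ γ⁻¹).symm
      simp only [h2, mul_inv_cancel, rowv_one j hj, mul_zero]
    exact this
  · intro h
    have hrow : ∀ k, k ≠ Fin.last n → rowv (N := N) (γ' * γ⁻¹) k = 0 := by
      intro k hk
      have := h k hk
      rw [← ZMod.intCast_zmod_eq_zero_iff_dvd] at this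
      exact this
    set c : ZMod N := rowv (γ' * γ⁻¹) (Fin.last n) with hc
    have hcu : IsUnit c := by
      have hprim : IsPrimitive (rowv (N := N) (γ' * γ⁻¹)) := brow_primitive _
      rw [_root_.IsPrimitive] at hprim
      have hle : Ideal.span (Set.range (rowv (N := N) (γ' * γ⁻¹))) ≤ Ideal.span {c} := by
        refine Ideal.span_le.mpr ?_
        rintro x ⟨k, rfl⟩
        by_cases hk : k = Fin.last n
        · subst hk; exact Ideal.subset_span rfl
        · rw [hrow k hk]; exact Ideal.zero_mem _
      exact Ideal.span_singleton_eq_top.mp (top_le_iff.mp (hprim ▸ hle))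
    have key : rowv (N := N) γ' = fun i => c * rowv γ i := by
      have h1 : γ' = (γ' * γ⁻¹) * γ := by group
      funext j
      conv_lhs => rw [h1]
      rw [rowv_mul]
      show ∑ k, rowv (N := N) (γ' * γ⁻¹) k * (modN γ) k j = _
      rw [Finset.sum_eq_single (Fin.last n)]
      · rfl
      · intro k _ hk
        rw [hrow k hk, zero_mul]
      · intro habs; exact absurd (Finset.mem_univ _) habs
    rw [brow_eq_mk, brow_eq_mk]
    exact Quotient.sound ⟨hcu.unit, by simpa using key⟩

end Aux
section Complete
open Matrix Finset

lemma gcd_split {m : ℕ} (f : Fin (m + 1) → ℤ) :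
    Finset.univ.gcd f
      = GCDMonoid.gcd (f (Fin.last m)) (Finset.univ.gcd (fun i : Fin m => f i.castSucc)) := by
  rw [Fin.univ_castSuccEmb, Finset.cons_eq_insert, Finset.gcd_insert]
  congr 1
  rw [Finset.map_eq_image, Finset.gcd_image]
  rfl

lemma complete_base (a : Fin 2 → ℤ) (h : Finset.univ.gcd a = 1) :
    ∃ γ : SL 2, ∀ j, γ.1 (Fin.last 1) j = a j := by
  have hd : Int.gcd (a 0) (a 1) = 1 := by
    have h1 : ((Int.gcd (a 0) (a 1) : ℤ)) ∣ Finset.univ.gcd a := by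
      refine Finset.dvd_gcd fun i _ => ?_
      fin_cases i
      · exact Int.gcd_dvd_left _ _
      · exact Int.gcd_dvd_right _ _
    rw [h] at h1
    have := Int.eq_one_of_dvd_one (by positivity) h1
    omega
  have hbez : a 0 * Int.gcdA (a 0) (a 1) + a 1 * Int.gcdB (a 0) (a 1) = 1 := by
    have := Int.gcd_eq_gcd_ab (a 0) (a 1)
    rw [hd] at this
    omega
  refine ⟨⟨!![Int.gcdB (a 0) (a 1), -Int.gcdA (a 0) (a 1); a 0, a 1], ?_⟩, ?_⟩
  · rw [Matrix.det_fin_two_of]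
    linarith [hbez]
  · intro j
    have hl : Fin.last 1 = 1 := rfl
    rw [hl]
    fin_cases j <;> simp

end Complete
section Step
open Matrix Finset

lemma complete_step (n : ℕ)
    (IH : ∀ a : Fin (n + 1) → ℤ, Finset.univ.gcd a = 1 →
      ∃ γ : SL (n + 1), ∀ j, γ.1 (Fin.last n) j = a j)
    (a : Fin (n + 2) → ℤ) (ha : Finset.univ.gcd a = 1) :
    ∃ γ : SL (n + 2), ∀ j, γ.1 (Fin.last (n + 1)) j = a j := by
  set t := a (Fin.last (n + 1)) with ht
  set a' : Fin (n + 1) → ℤ := fun i => a i.castSucc with ha'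
  set d := Finset.univ.gcd a' with hd
  have hsplit : (1 : ℤ) = GCDMonoid.gcd t d := by rw [← ha, gcd_split]
  by_cases hd0 : d = 0
  · have hz : ∀ i : Fin (n + 1), a' i = 0 := fun i =>
      Finset.gcd_eq_zero_iff.mp (hd.symm.trans hd0) i (Finset.mem_univ i)
    have ht1 : t = 1 ∨ t = -1 := by
      rw [hd0, gcd_zero_right] at hsplit
      exact Int.isUnit_iff.mp (normalize_eq_one.mp hsplit.symm)
    have h0l : (0 : Fin (n + 2)) ≠ Fin.last (n + 1) := by
      simp [Fin.ext_iff]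
    refine ⟨⟨Matrix.diagonal (fun i => if i = 0 ∨ i = Fin.last (n + 1) then t else 1), ?_⟩, ?_⟩
    · rw [Matrix.det_diagonal]
      rw [← Finset.mul_prod_erase _ _ (Finset.mem_univ (0 : Fin (n + 2)))]
      rw [← Finset.mul_prod_erase _ _
        (Finset.mem_erase.mpr ⟨h0l.symm, Finset.mem_univ (Fin.last (n + 1))⟩)]
      rw [Finset.prod_eq_one (by
        intro i hi
        simp only [Finset.mem_erase] at hi
        rw [if_neg (by push_neg; exact ⟨hi.2.1, hi.1⟩)])]
      rw [if_pos (Or.inl rfl), if_pos (Or.inr rfl), mul_one]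
      rcases ht1 with h | h <;> rw [h] <;> norm_num
    · intro j
      show Matrix.diagonal (fun i => if i = 0 ∨ i = Fin.last (n + 1) then t else 1)
        (Fin.last (n + 1)) j = a j
      by_cases hj : j = Fin.last (n + 1)
      · subst hj
        rw [Matrix.diagonal_apply_eq, if_pos (Or.inr rfl)]
      · rw [Matrix.diagonal_apply_ne' _ hj]
        have h5 := hz (j.castPred hj)
        simp only [ha'] at h5
        rw [Fin.castSucc_castPred] at h5
        exact h5.symm
  · have hdvd : ∀ i, d ∣ a' i := fun i => by
      rw [hd]; exact Finset.gcd_dvd (Finset.mem_univ i)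
    set b : Fin (n + 1) → ℤ := fun i => a' i / d with hb
    have hdb : ∀ i, d * b i = a' i := fun i => by
      simp only [hb]; exact Int.mul_ediv_cancel' (hdvd i)
    have hbg : Finset.univ.gcd b = 1 := by
      obtain ⟨i, hi⟩ : ∃ i, a' i ≠ 0 := by
        by_contra hcon
        push_neg at hcon
        exact hd0 (hd.trans (Finset.gcd_eq_zero_iff.mpr fun x _ => hcon x))
      have h6 := Finset.gcd_div_eq_one (f := a') (Finset.mem_univ i) hi
      rw [hb, hd]
      exact h6
    obtain ⟨B, hB⟩ := IH b hbg
    have hgcd_td : Int.gcd t d = 1 := by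
      have h2 := Int.coe_gcd t d
      rw [← hsplit] at h2
      omega
    have hbez : d * Int.gcdB t d + t * Int.gcdA t d = 1 := by
      have h3 := Int.gcd_eq_gcd_ab t d
      rw [hgcd_td] at h3
      push_cast at h3
      linarith
    set u := Int.gcdB t d with hu
    set v := Int.gcdA t d with hv
    set C : Matrix (Fin (n + 2)) (Fin (n + 2)) ℤ := Matrix.of fun r c =>
      if hr : r = Fin.last (n + 1) then
        (if hc : c = Fin.last (n + 1) then t else d * b (c.castPred hc))
      else
        if hc : c = Fin.last (n + 1) then (if r.castPred hr = Fin.last n then -u else 0)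
        else if r.castPred hr = Fin.last n then v * b (c.castPred hc)
             else B.1 (r.castPred hr) (c.castPred hc) with hC
    have hcsl : ∀ r' : Fin (n + 1), Fin.castSucc r' ≠ Fin.last (n + 1) :=
      fun r' => (Fin.castSucc_lt_last r').ne
    have hM1 : C.submatrix Fin.castSucc Fin.castSucc
        = Matrix.updateRow B.1 (Fin.last n) (v • b) := by
      ext r' c'
      simp only [Matrix.submatrix_apply, hC, Matrix.of_apply]
      rw [dif_neg (hcsl r'), dif_neg (hcsl c'), Fin.castPred_castSucc, Fin.castPred_castSucc,
        Matrix.updateRow_apply]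
      by_cases h : r' = Fin.last n
      · rw [if_pos h, if_pos h, Pi.smul_apply, smul_eq_mul]
      · rw [if_neg h, if_neg h]
    have hpiv : ∀ r' : Fin (n + 1), (Fin.castSucc (Fin.last n)).succAbove r'
        = if r' = Fin.last n then Fin.last (n + 1) else Fin.castSucc r' := by
      intro r'
      by_cases h : r' = Fin.last n
      · subst h
        rw [if_pos rfl, Fin.succAbove_of_le_castSucc _ _ (le_refl _), Fin.succ_last]
      · rw [if_neg h, Fin.succAbove_of_castSucc_lt]
        exact Fin.castSucc_lt_castSucc_iff.mpr (lt_of_le_of_ne (Fin.le_last r') h)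
    have hM2 : C.submatrix (Fin.castSucc (Fin.last n)).succAbove Fin.castSucc
        = Matrix.updateRow B.1 (Fin.last n) (d • b) := by
      ext r' c'
      simp only [Matrix.submatrix_apply]
      rw [hpiv r', Matrix.updateRow_apply]
      by_cases h : r' = Fin.last n
      · rw [if_pos h, if_pos h]
        simp only [hC, Matrix.of_apply]
        simp [hcsl c', Fin.castPred_castSucc]
      · rw [if_neg h, if_neg h]
        simp only [hC, Matrix.of_apply]
        rw [dif_neg (hcsl r'), dif_neg (hcsl c'), Fin.castPred_castSucc, Fin.castPred_castSucc,
          if_neg h]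
    have hrowB : b = B.1 (Fin.last n) := funext fun j => (hB j).symm
    have hdetM1 : (C.submatrix Fin.castSucc Fin.castSucc).det = v := by
      rw [hM1, Matrix.det_updateRow_smul, hrowB, Matrix.updateRow_eq_self, B.2, mul_one]
    have hdetM2 : (C.submatrix (Fin.castSucc (Fin.last n)).succAbove Fin.castSucc).det = d := by
      rw [hM2, Matrix.det_updateRow_smul, hrowB, Matrix.updateRow_eq_self, B.2, mul_one]
    have hCe0 : ∀ r : Fin n, C (Fin.castSucc (Fin.castSucc r)) (Fin.last (n + 1)) = 0 := by
      intro r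
      simp only [hC, Matrix.of_apply]
      simp [hcsl, Fin.castPred_castSucc, (Fin.castSucc_lt_last r.castSucc).ne,
        (Fin.castSucc_lt_last r).ne]
    have hCe1 : C (Fin.castSucc (Fin.last n)) (Fin.last (n + 1)) = -u := by
      simp only [hC, Matrix.of_apply]
      simp [hcsl, Fin.castPred_castSucc]
    have hCe2 : C (Fin.last (n + 1)) (Fin.last (n + 1)) = t := by
      simp only [hC, Matrix.of_apply]
      simp
    have hdet : C.det = 1 := by
      rw [Matrix.det_succ_column C (Fin.last (n + 1)), Fin.sum_univ_castSucc,
        Fin.sum_univ_castSucc]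
      simp only [Fin.succAbove_last, hCe0, hCe1, hCe2, mul_zero, zero_mul,
        Finset.sum_const_zero, zero_add, Fin.coe_castSucc, Fin.val_last]
      rw [hdetM1, hdetM2]
      have hodd : (-1 : ℤ) ^ (n + (n + 1)) = -1 := Odd.neg_one_pow ⟨n, by ring⟩
      have heven : (-1 : ℤ) ^ ((n + 1) + (n + 1)) = 1 := Even.neg_one_pow ⟨n + 1, by ring⟩
      rw [hodd, heven]
      linarith [hbez]
    refine ⟨⟨C, hdet⟩, fun j => ?_⟩
    show C (Fin.last (n + 1)) j = a j
    simp only [hC, Matrix.of_apply]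
    by_cases hj : j = Fin.last (n + 1)
    · simp only [hj]
      simp [ht.symm]
    · have h8 := hdb (j.castPred hj)
      simp only [ha'] at h8
      rw [Fin.castSucc_castPred] at h8
      simp only [dif_neg hj]
      simp [hj]
      exact h8

end Step
section Lift
open Matrix Finset

lemma complete_row : ∀ n : ℕ, 1 ≤ n → ∀ a : Fin (n + 1) → ℤ, Finset.univ.gcd a = 1 →
    ∃ γ : SL (n + 1), ∀ j, γ.1 (Fin.last n) j = a j := by
  intro n hn
  induction n, hn using Nat.le_induction with
  | base => exact complete_base
  | succ m hm IH => exact complete_step m IH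

lemma lift_primitive {n N : ℕ} (hn : 1 ≤ n) (hN : 1 ≤ N) (v : Fin (n + 1) → ZMod N)
    (hv : IsPrimitive v) :
    ∃ a : Fin (n + 1) → ℤ, (∀ i, ((a i : ℤ) : ZMod N) = v i) ∧ Finset.univ.gcd a = 1 := by
  haveI : NeZero N := ⟨by omega⟩
  obtain ⟨c, hc⟩ : ∃ c : Fin (n + 1) → ZMod N, ∑ i, c i * v i = 1 := by
    have h1 : (1 : ZMod N) ∈ Ideal.span (Set.range v) := by
      rw [_root_.IsPrimitive] at hv
      rw [hv]
      exact Submodule.mem_top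
    exact Ideal.mem_span_range_iff_exists_fun.mp h1
  set zv : Fin (n + 1) → ℤ := fun i => ((v i).val : ℤ) with hzv
  have hzv_cast : ∀ i, ((zv i : ℤ) : ZMod N) = v i := by
    intro i
    simp only [hzv]
    push_cast
    exact ZMod.natCast_rightInverse (v i)
  have hc_cast : ∀ i, ((((c i).val : ℤ)) : ZMod N) = c i := fun i => by
    push_cast
    exact ZMod.natCast_rightInverse (c i)
  have hkey : ∀ p : ℕ, p.Prime → (p : ℤ) ∣ (N : ℤ) → (∀ i, (p : ℤ) ∣ zv i) → False := by
    intro p hp hpN hpall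
    have hsum : ((∑ i, ((c i).val : ℤ) * zv i - 1 : ℤ) : ZMod N) = 0 := by
      rw [Int.cast_sub, Int.cast_sum, Int.cast_one]
      have h9 : ∀ i ∈ Finset.univ, ((((c i).val : ℤ) * zv i : ℤ) : ZMod N) = c i * v i := by
        intro i _
        rw [Int.cast_mul, hc_cast i, hzv_cast i]
      rw [Finset.sum_congr rfl h9, hc, sub_self]
    obtain ⟨k, hk⟩ := (ZMod.intCast_zmod_eq_zero_iff_dvd _ N).mp hsum
    have h2 : (p : ℤ) ∣ ∑ i, ((c i).val : ℤ) * zv i :=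
      Finset.dvd_sum fun i _ => Dvd.dvd.mul_left (hpall i) _
    have h3 : (p : ℤ) ∣ 1 := by
      have h4 : (1 : ℤ) = (∑ i, ((c i).val : ℤ) * zv i) - (N : ℤ) * k := by omega
      rw [h4]
      exact dvd_sub h2 (Dvd.dvd.mul_right hpN k)
    have := Int.le_of_dvd one_pos h3
    have := hp.two_le
    omega
  have hlast0 : Fin.last n ≠ (0 : Fin (n + 1)) := by
    simp only [ne_eq, Fin.ext_iff, Fin.val_last, Fin.val_zero]
    omega
  set w : Fin (n + 1) → ℤ := fun i => if i = Fin.last n then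
      (if zv (Fin.last n) = 0 then (N : ℤ) else zv (Fin.last n)) else zv i with hw
  have hw_cast : ∀ i, ((w i : ℤ) : ZMod N) = v i := by
    intro i
    simp only [hw]
    by_cases hi : i = Fin.last n
    · rw [if_pos hi]
      by_cases h0 : zv (Fin.last n) = 0
      · rw [if_pos h0, hi]
        rw [← hzv_cast (Fin.last n), h0]
        simp
      · rw [if_neg h0, hi]
        exact hzv_cast _
    · rw [if_neg hi]
      exact hzv_cast i
  have hw_last : w (Fin.last n) ≠ 0 := by
    simp only [hw, if_pos rfl]
    by_cases h0 : zv (Fin.last n) = 0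
    · rw [if_pos h0]
      exact_mod_cast (by omega : (N : ℤ) ≠ 0)
    · rw [if_neg h0]
      exact h0
  have hwkey : ∀ p : ℕ, p.Prime → (p : ℤ) ∣ (N : ℤ) → (∀ i, (p : ℤ) ∣ w i) → False := by
    intro p hp hpN hpall
    refine hkey p hp hpN fun i => ?_
    by_cases hi : i = Fin.last n
    · subst hi
      have h5 := hpall (Fin.last n)
      simp only [hw, if_pos rfl] at h5
      by_cases h0 : zv (Fin.last n) = 0
      · rw [h0]
        exact dvd_zero _
      · rwa [if_neg h0] at h5
    · have h5 := hpall i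
      simp only [hw, if_neg hi] at h5
      exact h5
  set s : Finset (Fin (n + 1)) := Finset.univ.erase 0 with hs
  have hlast_mem : Fin.last n ∈ s := Finset.mem_erase.mpr ⟨hlast0, Finset.mem_univ _⟩
  set g := s.gcd w with hg
  have hg0 : g ≠ 0 := fun h => hw_last (Finset.gcd_eq_zero_iff.mp (hg.symm.trans h) _ hlast_mem)
  set P : Finset ℕ := g.natAbs.primeFactors.filter (fun p => ¬ (p : ℤ) ∣ w 0) with hP
  set cc : ℕ := ∏ p ∈ P, p with hcc
  set aa : Fin (n + 1) → ℤ := fun i => if i = 0 then w 0 + (cc : ℤ) * N else w i with haa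
  refine ⟨aa, ?_, ?_⟩
  · intro i
    simp only [haa]
    by_cases hi : i = 0
    · rw [if_pos hi, hi]
      push_cast
      rw [ZMod.natCast_self, mul_zero, add_zero]
      exact hw_cast 0
    · rw [if_neg hi]
      exact hw_cast i
  · by_contra hne
    set D := Finset.univ.gcd aa with hD
    have hDdvd : ∀ i, D ∣ aa i := fun i => by
      rw [hD]; exact Finset.gcd_dvd (Finset.mem_univ i)
    have hDabs : D = (D.natAbs : ℤ) := by
      have h6 : normalize D = D := by rw [hD]; exact Finset.normalize_gcd
      rw [← Int.abs_eq_normalize, Int.abs_eq_natAbs] at h6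
      exact h6.symm
    have hD1 : D.natAbs ≠ 1 := fun h => hne (by rw [hDabs, h]; simp)
    obtain ⟨p, hp, hpD⟩ := Nat.exists_prime_and_dvd hD1
    have hpD' : (p : ℤ) ∣ D := Int.natAbs_dvd_natAbs.mp (by simpa using hpD)
    have hpw : ∀ i, i ≠ 0 → (p : ℤ) ∣ w i := by
      intro i hi
      have h7 := hpD'.trans (hDdvd i)
      simp only [haa, if_neg hi] at h7
      exact h7
    have hpg : (p : ℤ) ∣ g := by
      rw [hg]
      exact Finset.dvd_gcd fun i hi => hpw i (Finset.mem_erase.mp hi).1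
    have hpmem : p ∈ g.natAbs.primeFactors :=
      Nat.mem_primeFactors.mpr
        ⟨hp, by simpa using Int.natAbs_dvd_natAbs.mpr hpg, Int.natAbs_ne_zero.mpr hg0⟩
    have hpa0 : (p : ℤ) ∣ w 0 + (cc : ℤ) * N := by
      have h7 := hpD'.trans (hDdvd 0)
      simp only [haa, if_pos rfl] at h7
      exact h7
    have hpprime : Prime (p : ℤ) := Nat.prime_iff_prime_int.mp hp
    by_cases hp0 : (p : ℤ) ∣ w 0
    · have hpcN : (p : ℤ) ∣ (cc : ℤ) * N := (dvd_add_right hp0).mp hpa0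
      have hpcc : ¬ (p : ℤ) ∣ (cc : ℤ) := by
        intro hdvdcc
        have hpcc' : p ∣ cc := Int.ofNat_dvd.mp hdvdcc
        rw [hcc] at hpcc'
        obtain ⟨q, hqP, hpq⟩ := (Prime.dvd_finset_prod_iff hp.prime _).mp hpcc'
        have hq : q.Prime := Nat.prime_of_mem_primeFactors (Finset.mem_filter.mp hqP).1
        have hpeq : p = q := (Nat.prime_dvd_prime_iff_eq hp hq).mp hpq
        subst hpeq
        exact (Finset.mem_filter.mp hqP).2 hp0
      rcases hpprime.dvd_mul.mp hpcN with h8 | h8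
      · exact hpcc h8
      · refine hwkey p hp h8 fun i => ?_
        by_cases hi : i = 0
        · rw [hi]; exact hp0
        · exact hpw i hi
    · have hpP : p ∈ P := by
        rw [hP]
        exact Finset.mem_filter.mpr ⟨hpmem, hp0⟩
      have hpcc : (p : ℤ) ∣ (cc : ℤ) := by
        rw [hcc]
        exact_mod_cast Int.ofNat_dvd.mpr (Finset.dvd_prod_of_mem _ hpP)
      have h9 : (p : ℤ) ∣ w 0 + (cc : ℤ) * N - (cc : ℤ) * N :=
        dvd_sub hpa0 (hpcc.mul_right (N : ℤ))
      exact hp0 (by simpa using h9)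

end Lift
/-- The bottom row map `𝔟 : SL_{n+1}(ℤ) → ℙ^n(ℤ/Nℤ)` induces a bijection
`Γ₀(N)\SL_{n+1}(ℤ) ≃ ℙ^n(ℤ/Nℤ)`: it is surjective, and `𝔟(γ) = 𝔟(γ′)` iff
`γ′γ⁻¹ ∈ Γ₀(N)`.  Moreover it is equivariant for the right action of `SL_{n+1}(ℤ)`. -/
theorem bottom_row_bijection (n N : ℕ) (hn : 1 ≤ n) (hN : 1 ≤ N) :
    Function.Surjective (brow (n := n) N) ∧
    (∀ γ γ' : SL (n + 1), brow N γ = brow N γ' ↔ Gamma0 N (γ' * γ⁻¹)) ∧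
    (∀ γ δ : SL (n + 1), brow N (γ * δ) = ract (brow N γ) δ) := by
  refine ⟨?_, fun γ γ' => brow_iff γ γ', fun γ δ => brow_mul γ δ⟩
  intro x
  induction x using Quotient.inductionOn with
  | h vp =>
    rcases vp with ⟨v, hv⟩
    obtain ⟨a, hacast, hagcd⟩ := lift_primitive hn hN v hv
    obtain ⟨γ, hγ⟩ := complete_row n hn a hagcd
    refine ⟨γ, ?_⟩
    rw [brow_eq_mk]
    refine congrArg (Quotient.mk _) (Subtype.ext (funext fun j => ?_))
    show ((γ.1 (Fin.last n) j : ℤ) : ZMod N) = v j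
    rw [hγ j]
    exact hacast j
end

section
/- Every 4×5 integer matrix M whose columns are primitive vectors in ℤ⁴, no two of which are equal up to sign, and for which the maximum of the absolute values of the determinants of the 4×4 submatrices (obtained by choosing 4 of the 5 columns) equals 1, can be transformed into exactly one of the three matrices [I₄ | e₁+e₂+e₃+e₄], [I₄ | e₁+e₂+e₃], [I₄ | e₁+e₂] by multiplying M on the left by a matrix in GL₄(ℤ), permuting its columns, and changing the signs of some of its columns. (That is, modulo the action of GL₄(ℤ), there are exactly three classes of reduced basis 1-sharblies for n = 4.) -/
open Matrix Finset

lemma exists_perm_factor (τ : Fin 4 → Fin 5) (hinj : Function.Injective τ)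
    (j1 : Fin 5) (h : ∀ l, τ l ≠ j1) :
    ∃ ρ : Equiv.Perm (Fin 4), ∀ l, τ l = j1.succAbove (ρ l) := by
  choose ρ0 hρ0 using fun l => Fin.exists_succAbove_eq (h l)
  have hρinj : Function.Injective ρ0 := by
    intro a b hab
    apply hinj
    rw [← hρ0 a, ← hρ0 b, hab]
  exact ⟨Equiv.ofBijective ρ0 (Finite.injective_iff_bijective.mp hρinj),
    fun l => (hρ0 l).symm⟩

lemma submatrix_mul_id (A : Matrix (Fin 4) (Fin 4) ℤ) (M : Matrix (Fin 4) (Fin 5) ℤ)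
    (g : Fin 4 → Fin 5) :
    (A * M).submatrix id g = A * (M.submatrix id g) := by
  ext i j
  simp [Matrix.mul_apply]

def zcount (X : Matrix (Fin 4) (Fin 5) ℤ) : ℕ :=
  (Finset.univ.filter fun j : Fin 5 => (X.submatrix id j.succAbove).det = 0).card

def target (k : Fin 3) : Matrix (Fin 4) (Fin 5) ℤ := fun i j =>
  if (j : ℕ) = 4 then (if (i : ℕ) < 4 - (k : ℕ) then (1 : ℤ) else 0)
  else (if (i : ℕ) = (j : ℕ) then 1 else 0)

lemma zcount_target : ∀ k : Fin 3, zcount (target k) = (k : ℕ) := by decide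

lemma zcount_invariant (M : Matrix (Fin 4) (Fin 5) ℤ) (g : GL (Fin 4) ℤ)
    (π : Equiv.Perm (Fin 5)) (ε : Fin 5 → ℤˣ) (N : Matrix (Fin 4) (Fin 5) ℤ)
    (hN : ∀ i j, N i j = (ε j : ℤ) * ((g : Matrix (Fin 4) (Fin 4) ℤ) * M) i (π j)) :
    zcount N = zcount M := by
  have hdetg : IsUnit ((g : Matrix (Fin 4) (Fin 4) ℤ).det) := by
    apply IsUnit.of_mul_eq_one ((g⁻¹ : GL (Fin 4) ℤ) : Matrix (Fin 4) (Fin 4) ℤ).det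
    rw [← Matrix.det_mul]
    norm_cast
    rw [mul_inv_cancel]
    simp
  have key : ∀ j1 : Fin 5, ((N.submatrix id j1.succAbove).det = 0 ↔
      (M.submatrix id (π j1).succAbove).det = 0) := by
    intro j1
    obtain ⟨ρ, hρ⟩ := exists_perm_factor (fun l => π (j1.succAbove l))
      (π.injective.comp (Fin.succAbove_right_injective))
      (π j1) (fun l hc => (Fin.succAbove_ne j1 l) (π.injective hc))
    have h1 : N.submatrix id j1.succAbove = Matrix.of fun i l =>
        (ε (j1.succAbove l) : ℤ) *
          ((((g : Matrix (Fin 4) (Fin 4) ℤ) * M).submatrix id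
            (π j1).succAbove).submatrix id ρ) i l := by
      ext i l
      simp [hN, hρ l]
    rw [h1, Matrix.det_mul_row, Matrix.det_permute',
      submatrix_mul_id, Matrix.det_mul]
    constructor
    · intro h
      rcases mul_eq_zero.mp h with h | h
      · exact absurd h (Finset.prod_ne_zero_iff.mpr fun l _ => Units.ne_zero _)
      rcases mul_eq_zero.mp h with h | h
      · exact absurd h (Units.ne_zero _)
      rcases mul_eq_zero.mp h with h | h
      · exact absurd h hdetg.ne_zero
      · exact h
    · intro h
      rw [h]
      ring
  unfold zcount
  apply Finset.card_bij' (fun j1 _ => π j1) (fun j _ => π⁻¹ j)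
  · intro j1 hj1
    simp only [Finset.mem_filter, Finset.mem_univ, true_and] at hj1 ⊢
    exact (key j1).mp hj1
  · intro j hj
    simp only [Finset.mem_filter, Finset.mem_univ, true_and] at hj ⊢
    refine (key (π⁻¹ j)).mpr ?_
    rwa [← Equiv.Perm.mul_apply, mul_inv_cancel, Equiv.Perm.one_apply]
  · intro j1 _; simp
  · intro j _; simp

lemma normalize_vector (v : Fin 4 → ℤ) (hb : ∀ i, v i = -1 ∨ v i = 0 ∨ v i = 1)
    (h2 : ∃ a b : Fin 4, a ≠ b ∧ v a ≠ 0 ∧ v b ≠ 0) :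
    ∃ (k : Fin 3) (σ : Equiv.Perm (Fin 4)) (d : Fin 4 → ℤˣ),
      ∀ i : Fin 4, (if (i : ℕ) < 4 - (k : ℕ) then (1 : ℤ) else 0)
        = (d i : ℤ) * v (σ i) := by
  classical
  set f : Fin 4 → ℕ := fun i => if v i = 0 then 1 else 0 with hf
  set σ : Equiv.Perm (Fin 4) := Tuple.sort f with hσ
  have hmono : Monotone (f ∘ σ) := Tuple.monotone_sort f
  set m := (Finset.univ.filter fun i : Fin 4 => v (σ i) ≠ 0).card with hm
  have hfv : ∀ i : Fin 4, v (σ i) ≠ 0 ↔ f (σ i) = 0 := by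
    intro i; simp [hf]
  have hzero : ∀ i : Fin 4, v (σ i) ≠ 0 ↔ (i : ℕ) < m := by
    intro i
    constructor
    · intro hi
      have hsub : Finset.Iic i ⊆ Finset.univ.filter fun j : Fin 4 => v (σ j) ≠ 0 := by
        intro j hj
        simp only [Finset.mem_Iic] at hj
        simp only [Finset.mem_filter, Finset.mem_univ, true_and]
        have := hmono hj
        simp only [Function.comp_apply] at this
        rw [(hfv i).mp hi] at this
        rw [hfv]
        omega
      have := Finset.card_le_card hsub
      rw [Fin.card_Iic] at this
      omega
    · intro hi
      by_contra hvi
      have hfi : f (σ i) = 1 := by simp [hf]; simpa using hvi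
      have hsub : (Finset.univ.filter fun j : Fin 4 => v (σ j) ≠ 0) ⊆ Finset.Iio i := by
        intro j hj
        simp only [Finset.mem_filter, Finset.mem_univ, true_and] at hj
        simp only [Finset.mem_Iio]
        by_contra hji
        push_neg at hji
        have := hmono hji
        simp only [Function.comp_apply] at this
        rw [hfi] at this
        rw [hfv] at hj
        omega
      have := Finset.card_le_card hsub
      rw [Fin.card_Iio] at this
      omega
  have hm2 : 2 ≤ m := by
    obtain ⟨a, b, hab, ha, hb'⟩ := h2
    have hss : ({σ⁻¹ a, σ⁻¹ b} : Finset (Fin 4)) ⊆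
        Finset.univ.filter fun i : Fin 4 => v (σ i) ≠ 0 := by
      intro x hx
      simp only [Finset.mem_insert, Finset.mem_singleton] at hx
      simp only [Finset.mem_filter, Finset.mem_univ, true_and]
      rcases hx with rfl | rfl <;> simp [ha, hb']
    have hcard : ({σ⁻¹ a, σ⁻¹ b} : Finset (Fin 4)).card = 2 := by
      rw [Finset.card_insert_of_notMem (by simp [hab]), Finset.card_singleton]
    calc 2 = ({σ⁻¹ a, σ⁻¹ b} : Finset (Fin 4)).card := hcard.symm
    _ ≤ m := Finset.card_le_card hss
  have hm4 : m ≤ 4 := by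
    have := Finset.card_filter_le (Finset.univ : Finset (Fin 4))
      (fun i : Fin 4 => v (σ i) ≠ 0)
    simpa using this
  refine ⟨⟨4 - m, by omega⟩, σ, fun i => if v (σ i) = -1 then -1 else 1, fun i => ?_⟩
  have h4m : 4 - (4 - m) = m := by omega
  simp only [h4m]
  by_cases h : (i : ℕ) < m
  · rw [if_pos h]
    have hvi := (hzero i).mpr h
    rcases hb (σ i) with h1 | h1 | h1
    · rw [if_pos h1, h1]; norm_num
    · exact absurd h1 hvi
    · rw [if_neg (by rw [h1]; norm_num), h1]; norm_num
  · rw [if_neg h]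
    have hvi : v (σ i) = 0 := by
      by_contra hc
      exact h ((hzero i).mp hc)
    rw [hvi]
    ring

/-- Every `4 × 5` integer matrix with primitive columns, no two of which are equal up
to sign, whose `4 × 4` column-minors have maximal absolute determinant `1`, can be
transformed into exactly one of the three standard matrices
`[I₄ | e₁+e₂+e₃+e₄]`, `[I₄ | e₁+e₂+e₃]`, `[I₄ | e₁+e₂]`
by left multiplication by an element of `GL₄(ℤ)`, a permutation of the columns, and
sign changes of the columns: modulo `GL₄(ℤ)` there are exactly three classes of
reduced basis 1-sharblies for `n = 4`. -/
theorem three_classes_of_reduced_one_sharblies (M : Matrix (Fin 4) (Fin 5) ℤ)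
    (hprim : ∀ j : Fin 5, Finset.univ.gcd (fun i => M i j) = 1)
    (hdist : ∀ j j' : Fin 5, j ≠ j' →
        (fun i => M i j) ≠ (fun i => M i j') ∧ (fun i => M i j) ≠ (fun i => -M i j'))
    (hred : (Finset.univ.sup fun j : Fin 5 =>
        (M.submatrix id j.succAbove).det.natAbs) = 1) :
    ∃! k : Fin 3, ∃ (g : GL (Fin 4) ℤ) (π : Equiv.Perm (Fin 5)) (ε : Fin 5 → ℤˣ),
      (fun (i : Fin 4) (j : Fin 5) =>
          if (j : ℕ) = 4 then (if (i : ℕ) < 4 - (k : ℕ) then (1 : ℤ) else 0)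
          else (if (i : ℕ) = (j : ℕ) then 1 else 0))
        = fun i j => (ε j : ℤ) * ((g : Matrix (Fin 4) (Fin 4) ℤ) * M) i (π j) := by
  classical
  -- uniqueness helper
  have huniq : ∀ (kk : Fin 3) (g : GL (Fin 4) ℤ) (π : Equiv.Perm (Fin 5)) (ε : Fin 5 → ℤˣ),
      ((fun (i : Fin 4) (j : Fin 5) =>
          if (j : ℕ) = 4 then (if (i : ℕ) < 4 - (kk : ℕ) then (1 : ℤ) else 0)
          else (if (i : ℕ) = (j : ℕ) then 1 else 0))
        = fun i j => (ε j : ℤ) * ((g : Matrix (Fin 4) (Fin 4) ℤ) * M) i (π j)) →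
      (kk : ℕ) = zcount M := by
    intro kk g π ε h
    have hN : ∀ i j, target kk i j
        = (ε j : ℤ) * ((g : Matrix (Fin 4) (Fin 4) ℤ) * M) i (π j) :=
      fun i j => congrFun (congrFun h i) j
    rw [← zcount_target kk]
    exact zcount_invariant M g π ε (target kk) hN
  -- existence
  obtain ⟨j0, -, hj0⟩ := Finset.exists_mem_eq_sup (Finset.univ : Finset (Fin 5))
    ⟨0, Finset.mem_univ 0⟩ (fun j : Fin 5 => (M.submatrix id j.succAbove).det.natAbs)
  rw [hred] at hj0
  set A : Matrix (Fin 4) (Fin 4) ℤ := M.submatrix id j0.succAbove with hAdef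
  have hAunit : IsUnit A.det := by
    rw [Int.isUnit_iff]
    rcases Int.natAbs_eq_iff.mp hj0.symm with h | h
    · left; exact_mod_cast h
    · right; exact_mod_cast h
  haveI : Invertible A := A.invertibleOfIsUnitDet hAunit
  haveI : Invertible A.det := A.detInvertibleOfInvertible
  set B : Matrix (Fin 4) (Fin 5) ℤ := ⅟A * M with hBdef
  have hBsub : B.submatrix id j0.succAbove = 1 := by
    rw [hBdef, submatrix_mul_id]
    exact invOf_mul_self A
  have hBcol : ∀ (l : Fin 4) (i : Fin 4),
      B i (j0.succAbove l) = if i = l then 1 else 0 := by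
    intro l i
    have h := congrFun (congrFun hBsub i) l
    simpa [Matrix.one_apply] using h
  set v : Fin 4 → ℤ := fun i => B i j0 with hvdef
  -- bound on entries of v
  have hbound : ∀ i : Fin 4, (v i).natAbs ≤ 1 := by
    intro i
    have hval : v i = ⅟(A.det) * (A.updateCol i (fun m => M m j0)).det := by
      have h1 : v i = (⅟A *ᵥ (fun m => M m j0)) i := by
        simp [hvdef, hBdef, Matrix.mul_apply, Matrix.mulVec, dotProduct]
      rw [h1, Matrix.invOf_eq, Matrix.smul_mulVec,
        ← Matrix.cramer_eq_adjugate_mulVec]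
      simp [Matrix.cramer_apply]
    set τ : Fin 4 → Fin 5 := fun l => if l = i then j0 else j0.succAbove l with hτ
    have hτinj : Function.Injective τ := by
      intro a b hab
      by_cases ha : a = i <;> by_cases hbb : b = i
      · rw [ha, hbb]
      · rw [hτ] at hab; simp only [ha, if_pos rfl, if_neg hbb] at hab
        exact absurd hab.symm (Fin.succAbove_ne j0 b)
      · rw [hτ] at hab; simp only [hbb, if_neg ha, if_pos rfl] at hab
        exact absurd hab (Fin.succAbove_ne j0 a)
      · rw [hτ] at hab; simp only [if_neg ha, if_neg hbb] at hab
        exact Fin.succAbove_right_injective hab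
    have havoid : ∀ l, τ l ≠ j0.succAbove i := by
      intro l
      rw [hτ]
      by_cases hl : l = i
      · simp only [hl, if_pos rfl]
        exact (Fin.succAbove_ne j0 i).symm
      · simp only [if_neg hl]
        intro hc
        exact hl (Fin.succAbove_right_injective hc)
    obtain ⟨ρ, hρ⟩ := exists_perm_factor τ hτinj (j0.succAbove i) havoid
    have hupd : A.updateCol i (fun m => M m j0) = M.submatrix id τ := by
      ext m l
      by_cases hl : l = i
      · simp [Matrix.updateCol_apply, hl, hτ]
      · simp [Matrix.updateCol_apply, hl, hτ, hAdef]
    have hsub2 : M.submatrix id τ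
        = (M.submatrix id (j0.succAbove i).succAbove).submatrix id ρ := by
      ext m l
      simp [hρ l]
    have hinv1 : (⅟(A.det)).natAbs = 1 := by
      rcases Int.isUnit_iff.mp (isUnit_of_invertible (⅟(A.det))) with h | h <;> rw [h] <;> rfl
    have hle := Finset.le_sup (f := fun j : Fin 5 =>
      (M.submatrix id j.succAbove).det.natAbs) (Finset.mem_univ (j0.succAbove i))
    rw [hred] at hle
    calc (v i).natAbs
        = (⅟(A.det)).natAbs * (A.updateCol i (fun m => M m j0)).det.natAbs := by
          rw [hval, Int.natAbs_mul]
      _ = (M.submatrix id (j0.succAbove i).succAbove).det.natAbs := by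
          rw [hinv1, one_mul, hupd, hsub2, Matrix.det_permute', Int.natAbs_mul]
          rcases Int.units_eq_one_or (Equiv.Perm.sign ρ) with h | h <;> simp [h]
      _ ≤ 1 := hle
  have hb : ∀ i : Fin 4, v i = -1 ∨ v i = 0 ∨ v i = 1 := by
    intro i
    have := hbound i
    omega
  -- recovery of column j0 of M
  have hMA : ∀ i : Fin 4, M i j0 = ∑ m : Fin 4, A i m * v m := by
    have hAB : A * B = M := by
      rw [hBdef, ← Matrix.mul_assoc, mul_invOf_self, Matrix.one_mul]
    intro i
    conv_lhs => rw [← hAB]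
    rw [Matrix.mul_apply]
  -- v is nonzero
  have hvne : ∃ a : Fin 4, v a ≠ 0 := by
    by_contra h
    push_neg at h
    have hz : ∀ i : Fin 4, M i j0 = 0 := by
      intro i
      rw [hMA i]
      simp [h]
    have hg := hprim j0
    rw [Finset.gcd_eq_zero_iff.mpr (fun i _ => hz i)] at hg
    exact zero_ne_one hg
  -- at least two nonzero entries
  have h2 : ∃ a b : Fin 4, a ≠ b ∧ v a ≠ 0 ∧ v b ≠ 0 := by
    obtain ⟨a, ha⟩ := hvne
    by_contra hcon
    push_neg at hcon
    have hsingle : ∀ m : Fin 4, m ≠ a → v m = 0 := by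
      intro m hm
      by_contra hc
      exact hc (hcon a m (Ne.symm hm) ha)
    have hcol : ∀ i : Fin 4, M i j0 = M i (j0.succAbove a) * v a := by
      intro i
      rw [hMA i, Finset.sum_eq_single a]
      · rfl
      · intro m _ hm
        rw [hsingle m hm, mul_zero]
      · intro hm
        exact absurd (Finset.mem_univ a) hm
    obtain ⟨hd1, hd2⟩ := hdist j0 (j0.succAbove a) (Fin.succAbove_ne j0 a).symm
    rcases hb a with h1 | h1 | h1
    · apply hd2
      funext i
      rw [hcol i, h1]
      ring
    · exact ha h1
    · apply hd1
      funext i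
      rw [hcol i, h1, mul_one]
  obtain ⟨k, σ, d, hkd⟩ := normalize_vector v hb h2
  -- signed permutation matrix
  set S : Matrix (Fin 4) (Fin 4) ℤ :=
    fun i j => if σ i = j then (d i : ℤ) else 0 with hS
  set S' : Matrix (Fin 4) (Fin 4) ℤ :=
    fun i j => if σ j = i then (d j : ℤ) else 0 with hS'
  have hdd : ∀ i : Fin 4, (d i : ℤ) * (d i : ℤ) = 1 := by
    intro i
    rw [← Units.val_mul, Int.units_mul_self, Units.val_one]
  have hSS' : S * S' = 1 := by
    ext i j
    rw [Matrix.mul_apply, Finset.sum_eq_single (σ i)]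
    · by_cases hij : i = j
      · subst hij
        simp [hS, hS', Matrix.one_apply, hdd i]
      · have : σ j ≠ σ i := fun hc => hij (σ.injective hc).symm
        simp [hS, hS', Matrix.one_apply, hij, this]
    · intro m _ hm
      simp [hS, hS', Ne.symm hm]
    · intro hm
      exact absurd (Finset.mem_univ _) hm
  have hS'S : S' * S = 1 := by
    ext i j
    rw [Matrix.mul_apply, Finset.sum_eq_single (σ⁻¹ i)]
    · by_cases hij : i = j
      · subst hij
        simp [hS, hS', Matrix.one_apply, Equiv.apply_symm_apply, hdd (σ⁻¹ i)]
      · have h1 : σ (σ⁻¹ i) = i := σ.apply_symm_apply i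
        simp [hS, hS', Matrix.one_apply, h1, hij]
    · intro m _ hm
      have : σ m ≠ i := by
        intro hc
        apply hm
        rw [← hc]
        simp
      simp [hS, hS', this]
    · intro hm
      exact absurd (Finset.mem_univ _) hm
  set g : GL (Fin 4) ℤ :=
    (⟨S, S', hSS', hS'S⟩ : (Matrix (Fin 4) (Fin 4) ℤ)ˣ) * (unitOfInvertible A)⁻¹
    with hg
  have hgval : (g : Matrix (Fin 4) (Fin 4) ℤ) = S * ⅟A := rfl
  set π : Equiv.Perm (Fin 5) :=
    (finSuccEquiv' (Fin.last 4)).trans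
      ((Equiv.optionCongr σ).trans (finSuccEquiv' j0).symm) with hπ
  set ε : Fin 5 → ℤˣ := fun j => if h : (j : ℕ) < 4 then d ⟨j, h⟩ else 1 with hε
  have hSB : ∀ (i : Fin 4) (c : Fin 5),
      ((g : Matrix (Fin 4) (Fin 4) ℤ) * M) i c = (d i : ℤ) * B (σ i) c := by
    intro i c
    rw [hgval, Matrix.mul_assoc, ← hBdef, Matrix.mul_apply, Finset.sum_eq_single (σ i)]
    · simp [hS]
    · intro m _ hm
      simp [hS, Ne.symm hm]
    · intro hm
      exact absurd (Finset.mem_univ _) hm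
  have hEq : (fun (i : Fin 4) (j : Fin 5) =>
      if (j : ℕ) = 4 then (if (i : ℕ) < 4 - (k : ℕ) then (1 : ℤ) else 0)
      else (if (i : ℕ) = (j : ℕ) then 1 else 0))
      = fun i j => (ε j : ℤ) * ((g : Matrix (Fin 4) (Fin 4) ℤ) * M) i (π j) := by
    funext i j
    induction j using Fin.lastCases with
    | last =>
      have hπl : π (Fin.last 4) = j0 := by
        simp [hπ, finSuccEquiv'_at, finSuccEquiv'_symm_none]
      have hεl : ε (Fin.last 4) = 1 := by
        simp [hε]
      simp only [Fin.val_last, if_pos rfl, hπl, hεl, Units.val_one, one_mul, hSB]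
      exact hkd i
    | cast l =>
      have hval4 : ((Fin.castSucc l : Fin 5) : ℕ) ≠ 4 := by
        have := l.isLt
        simp only [Fin.coe_castSucc]
        omega
      have hπc : π (Fin.castSucc l) = j0.succAbove (σ l) := by
        rw [hπ]
        simp only [Equiv.trans_apply]
        rw [← Fin.succAbove_last, finSuccEquiv'_succAbove]
        simp [finSuccEquiv'_symm_some]
      have hεc : ε (Fin.castSucc l) = d l := by
        have hlt : ((Fin.castSucc l : Fin 5) : ℕ) < 4 := by
          simp only [Fin.coe_castSucc]
          exact l.isLt
        rw [hε]
        simp only [hlt, dif_pos]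
        congr 1
      simp only [hval4, if_neg, hπc, hεc, hSB, hBcol (σ l) (σ i)]
      by_cases hil : i = l
      · subst hil
        simp [hdd i]
      · have h1 : (i : ℕ) ≠ (l : ℕ) := fun hc => hil (Fin.ext hc)
        have h2 : σ i ≠ σ l := fun hc => hil (σ.injective hc)
        simp [h1, h2, hil]
  refine ⟨k, ⟨g, π, ε, hEq⟩, fun k' hk' => ?_⟩
  obtain ⟨g', π', ε', h'⟩ := hk'
  exact Fin.val_injective ((huniq k' g' π' ε' h').trans (huniq k g π ε hEq).symm)
end
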